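/- For every natural number n ≥ 1 and every real α with 0 < α < π/2, ∫_{α}^{π−α} sin((2n−1)θ) / (sin θ)^{2n+1} dθ = sin(2nα) / (n·(sin α)^{2n}). -/

import Mathlib

open Real

theorem stmt_19 (n : ℕ) (hn : 1 ≤ n) (α : ℝ) (h0 : 0 < α) (h1 : α < π / 2) :
    ∫ θ in α..(π - α), Real.sin ((2 * (n : ℝ) - 1) * θ) / (Real.sin θ) ^ (2 * n + 1)
      = Real.sin (2 * n * α) / (n * (Real.sin α) ^ (2 * n)) := by
  obtain ⟨m, rfl⟩ : ∃ m, n = m + 1 := ⟨n - 1, by omega⟩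
  have hπ := Real.pi_pos
  have hle : α ≤ π - α := by linarith
  have hsin : ∀ θ ∈ Set.uIcc α (π - α), 0 < Real.sin θ := by
    intro θ hθ
    rw [Set.uIcc_of_le hle] at hθ
    exact Real.sin_pos_of_pos_of_lt_pi (by linarith [hθ.1]) (by linarith [hθ.2])
  set nn : ℝ := (m : ℝ) + 1 with hnn
  have hnn0 : (0:ℝ) < nn := by positivity
  have key : ∀ θ ∈ Set.uIcc α (π - α),
      HasDerivAt (fun θ => -Real.sin (2 * nn * θ) / (2 * nn * Real.sin θ ^ (2 * (m+1))))
        (Real.sin ((2 * ((m+1 : ℕ):ℝ) - 1) * θ) / (Real.sin θ) ^ (2 * (m+1) + 1)) θ := by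
    intro θ hθ
    have hs : Real.sin θ ≠ 0 := ne_of_gt (hsin θ hθ)
    have hu : HasDerivAt (fun θ => -Real.sin (2 * nn * θ)) (-(Real.cos (2*nn*θ) * (2*nn))) θ := by
      have := (Real.hasDerivAt_sin (2*nn*θ)).comp θ ((hasDerivAt_id θ).const_mul (2*nn))
      exact this.neg.congr_deriv (by ring)
    have hv : HasDerivAt (fun θ => 2 * nn * Real.sin θ ^ (2*(m+1)))
        (2 * nn * ((2*(m+1) : ℕ) * Real.sin θ ^ (2*(m+1)-1) * Real.cos θ)) θ :=
      ((Real.hasDerivAt_sin θ).pow _).const_mul _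
    have hvne : 2 * nn * Real.sin θ ^ (2*(m+1)) ≠ 0 :=
      mul_ne_zero (by positivity) (pow_ne_zero _ hs)
    have hd := hu.div hv hvne
    refine hd.congr_deriv ?_
    have e1 : (2 * ((m+1 : ℕ):ℝ) - 1) * θ = 2*nn*θ - θ := by rw [hnn]; push_cast; ring
    have e2 : 2*(m+1)-1 = 2*m+1 := by omega
    have e3 : 2*(m+1) = 2*m+2 := by omega
    have e4 : 2*(m+1)+1 = 2*m+3 := by omega
    rw [e1, Real.sin_sub, e2, e3]
    field_simp
    push_cast
    ring
  rw [intervalIntegral.integral_eq_sub_of_hasDerivAt key ?_]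
  · have hsa : Real.sin α ≠ 0 := ne_of_gt (hsin α (by rw [Set.uIcc_of_le hle]; exact ⟨le_refl _, hle⟩))
    have hspi : Real.sin (π - α) = Real.sin α := Real.sin_pi_sub α
    have e5 : 2 * nn * (π - α) = -(2 * nn * α) + (m+1 : ℤ) * (2 * π) := by
      rw [hnn]; push_cast; ring
    rw [hspi, e5, Real.sin_add_int_mul_two_pi, Real.sin_neg]
    have e6 : (2 * ((m:ℝ)+1)) * α = 2 * nn * α := by rw [hnn]
    push_cast
    rw [e6]
    field_simp
    ring
  · apply ContinuousOn.intervalIntegrable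
    apply ContinuousOn.div
    · exact (Real.continuous_sin.comp (continuous_const.mul continuous_id)).continuousOn
    · exact (Real.continuous_sin.pow _).continuousOn
    · intro θ hθ
      exact pow_ne_zero _ (ne_of_gt (hsin θ hθ))
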